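/- For elementary cellular automaton Rule 30 on a ring of size n ≥ 2, the all-zeros configuration 0^n is a fixed point, and the alternating configurations (01)^{n/2} and (10)^{n/2} are fixed points when n is even; moreover these are the only fixed points. -/
import Mathlib


/-- Single-cell update: replace the state of cell `i` by the local rule applied
to its neighborhood on the ring `ZMod n`. -/
def eupdate (n : ℕ) (f : Bool → Bool → Bool → Bool) (x : ZMod n → Bool) (i : ZMod n) :
    ZMod n → Bool :=
  Function.update x i (f (x (i - 1)) (x i) (x (i + 1)))

/-- Synchronous (parallel) step. -/
def parStep (n : ℕ) (f : Bool → Bool → Bool → Bool) (x : ZMod n → Bool) : ZMod n → Bool :=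
  fun i => f (x (i - 1)) (x i) (x (i + 1))

/-- `x` is a fixed point of the parallel dynamics. -/
def IsFixedConfig (n : ℕ) (f : Bool → Bool → Bool → Bool) (x : ZMod n → Bool) : Prop :=
  ∀ i : ZMod n, f (x (i - 1)) (x i) (x (i + 1)) = x i

/-- One full sequential step under the sequential update mode `μ`
(a permutation of the cells): update cells one at a time in the order
`μ 0, μ 1, …, μ (n-1)`. -/
def seqStep (n : ℕ) (f : Bool → Bool → Bool → Bool) (μ : Fin n ≃ ZMod n)
    (x : ZMod n → Bool) : ZMod n → Bool :=
  (List.finRange n).foldl (fun y k => eupdate n f y (μ k)) x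

/-- One full sequential step under the descending order `(n-1, n-2, …, 0)`. -/
def seqStepDesc (n : ℕ) (f : Bool → Bool → Bool → Bool) (x : ZMod n → Bool) : ZMod n → Bool :=
  ((List.range n).reverse).foldl (fun y k => eupdate n f y (k : ZMod n)) x

/-- One full sequential step under the ascending order `(0, 1, …, n-1)`. -/
def seqStepAsc (n : ℕ) (f : Bool → Bool → Bool → Bool) (x : ZMod n → Bool) : ZMod n → Bool :=
  (List.range n).foldl (fun y k => eupdate n f y (k : ZMod n)) x

def rule30 : Bool → Bool → Bool → Bool
  | true, true, true => false
  | true, true, false => false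
  | true, false, true => false
  | true, false, false => true
  | false, true, true => true
  | false, true, false => true
  | false, false, true => true
  | false, false, false => false

theorem rule30_fixed_points (n : ℕ) (hn : 2 ≤ n) (x : ZMod n → Bool) :
    IsFixedConfig n rule30 x ↔
      (x = (fun _ => false) ∨
        (Even n ∧ ((∀ i : ZMod n, x i = decide (i.val % 2 = 0)) ∨
                   (∀ i : ZMod n, x i = decide (i.val % 2 = 1))))) := by
  haveI : NeZero n := ⟨by omega⟩
  haveI : Fact (1 < n) := ⟨by omega⟩
  have valadd : (2 : ℕ) ∣ n → ∀ a b : ZMod n, (a + b).val % 2 = (a.val + b.val) % 2 := by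
    intro h a b
    rw [ZMod.val_add, Nat.mod_mod_of_dvd _ h]
  constructor
  · intro h
    by_cases hz : x = fun _ => false
    · exact Or.inl hz
    right
    have hex : ∃ i, x i = true := by
      by_contra hc
      push_neg at hc
      exact hz (funext fun i => by simpa using hc i)
    obtain ⟨i, hi⟩ := hex
    have step : ∀ j : ZMod n, x j = true → x (j + 1) = false ∧ x (j + 2) = true := by
      intro j hj
      have h1 := h j
      have h2 := h (j + 1)
      rw [add_sub_cancel_right] at h2
      have hj2 : j + 1 + 1 = j + 2 := by ring
      rw [hj2] at h2
      rw [hj] at h1 h2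
      revert h1 h2
      rcases hb1 : x (j - 1) <;> rcases hb2 : x (j + 1) <;> rcases hb3 : x (j + 2) <;>
        simp [rule30]
    have main : ∀ k : ℕ, x (i + (2 * k : ℕ)) = true := by
      intro k
      induction k with
      | zero => simpa using hi
      | succ m ih =>
        have := (step _ ih).2
        have e : i + ((2 * m : ℕ) : ZMod n) + 2 = i + ((2 * (m + 1) : ℕ) : ZMod n) := by
          push_cast; ring
        rwa [e] at this
    have main2 : ∀ k : ℕ, x (i + (2 * k : ℕ) + 1) = false := fun k => (step _ (main k)).1
    have heven : Even n := by
      by_contra hodd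
      rw [Nat.not_even_iff_odd] at hodd
      obtain ⟨m, hm⟩ := hodd
      have h0 := main2 m
      have e : i + ((2 * m : ℕ) : ZMod n) + 1 = i := by
        have hz0 : ((2 * m + 1 : ℕ) : ZMod n) = 0 := by rw [← hm]; exact ZMod.natCast_self n
        push_cast at hz0 ⊢
        rw [add_assoc, hz0, add_zero]
      rw [e, hi] at h0
      simp at h0
    refine ⟨heven, ?_⟩
    have hdvd : (2 : ℕ) ∣ n := heven.two_dvd
    have key : ∀ j : ZMod n, x j = decide ((j - i).val % 2 = 0) ∧
        j.val % 2 = (i.val + (j - i).val) % 2 := by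
      intro j
      set d := (j - i).val with hd
      have hj : j = i + ((d : ℕ) : ZMod n) := by
        rw [hd, ZMod.natCast_val, ZMod.cast_id]; ring
      constructor
      · rcases Nat.even_or_odd d with ⟨k, hk⟩ | ⟨k, hk⟩
        · have hx : x j = true := by
            have hdk : d = 2 * k := by omega
            rw [hj, hdk]; exact main k
          have hd2 : d % 2 = 0 := by omega
          rw [hx, hd2]; rfl
        · have hx : x j = false := by
            have hdk : (d : ZMod n) = ((2 * k : ℕ) : ZMod n) + 1 := by
              have : d = 2 * k + 1 := by omega
              rw [this]; push_cast; ring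
            rw [hj, hdk, ← add_assoc]; exact main2 k
          have hd2 : d % 2 = 1 := by omega
          rw [hx, hd2]; rfl
      · conv_lhs => rw [hj]
        rw [valadd hdvd, ZMod.val_natCast, Nat.add_mod, Nat.mod_mod_of_dvd _ hdvd,
          ← Nat.add_mod]
    rcases Nat.mod_two_eq_zero_or_one i.val with hp | hp
    · left
      intro j
      obtain ⟨h1, h2⟩ := key j
      rw [h1, decide_eq_decide]
      omega
    · right
      intro j
      obtain ⟨h1, h2⟩ := key j
      rw [h1, decide_eq_decide]
      omega
  · rintro (rfl | ⟨heven, hx⟩)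
    · intro j; rfl
    · have hdvd : (2 : ℕ) ∣ n := heven.two_dvd
      have hval1 : ∀ j : ZMod n, (j + 1).val % 2 = (j.val + 1) % 2 := by
        intro j
        rw [valadd hdvd, ZMod.val_one]
      have hvalm : ∀ j : ZMod n, (j - 1).val % 2 = (j.val + 1) % 2 := by
        intro j
        have h1 := hval1 (j - 1)
        rw [sub_add_cancel] at h1
        omega
      intro j
      rcases hx with hx | hx
      · rw [hx (j - 1), hx j, hx (j + 1), hval1 j, hvalm j]
        rcases Nat.mod_two_eq_zero_or_one j.val with hp | hp <;>
          · have hq : (j.val + 1) % 2 = 1 - j.val % 2 := by omega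
            rw [hq, hp]; simp [rule30]
      · rw [hx (j - 1), hx j, hx (j + 1), hval1 j, hvalm j]
        rcases Nat.mod_two_eq_zero_or_one j.val with hp | hp <;>
          · have hq : (j.val + 1) % 2 = 1 - j.val % 2 := by omega
            rw [hq, hp]; simp [rule30]
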